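/- A simple digraph D on n vertices satisfies F(D) = n − 1 if and only if D has a source (a vertex with in-degree 0). -/
import Mathlib


/-- The set of out-neighbors of `v` in the digraph with arc relation `A`. -/
def Nout {V : Type} (A : V → V → Prop) (v : V) : Set V := {w | A v w}

/-- The set of in-neighbors of `v`. -/
def Nin {V : Type} (A : V → V → Prop) (v : V) : Set V := {w | A w v}

/-- One application of the color change rule to the set `S` of filled vertices. -/
def Bstep {V : Type} (A : V → V → Prop) (S : Set V) : Set V :=
  S ∪ {w | ∃ v ∈ S, Nout A v \ S = {w}}

/-- `S` is a zero forcing set: iterating the color change rule fills all vertices. -/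
def IsZFS {V : Type} (A : V → V → Prop) (S : Set V) : Prop :=
  ∃ t, (Bstep A)^[t] S = Set.univ

/-- The failed zero forcing number: the maximum cardinality of a failed zero forcing set. -/
noncomputable def Fnum {V : Type} (A : V → V → Prop) : ℕ :=
  sSup {k | ∃ S : Set V, ¬ IsZFS A S ∧ S.ncard = k}

/-- The zero forcing number: the minimum cardinality of a zero forcing set. -/
noncomputable def Znum {V : Type} (A : V → V → Prop) : ℕ :=
  sInf {k | ∃ S : Set V, IsZFS A S ∧ S.ncard = k}

/-- `W` is a critical set: `W` is nonempty and no vertex outside `W` has exactly one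
out-neighbor in `W`. -/
def IsCritical {V : Type} (A : V → V → Prop) (W : Set V) : Prop :=
  W.Nonempty ∧ ∀ v ∈ Wᶜ, (Nout A v ∩ W).ncard ≠ 1

/-- `D` is a directed cycle: either a single vertex with no arcs, or the vertices can be
cyclically labeled so that the arcs are exactly the consecutive ones. -/
def IsDirectedCycle {V : Type} [Fintype V] (A : V → V → Prop) : Prop :=
  (Fintype.card V = 1 ∧ ∀ u v : V, ¬ A u v) ∨
  (2 ≤ Fintype.card V ∧ ∃ e : ZMod (Fintype.card V) ≃ V,
      ∀ i j : ZMod (Fintype.card V), A (e i) (e j) ↔ j = i + 1)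

lemma notZFS_empty {V : Type} [Nonempty V] (A : V → V → Prop) : ¬ IsZFS A (∅ : Set V) := by
  have hfix : Bstep A (∅ : Set V) = ∅ := by
    unfold Bstep
    simp
  rintro ⟨t, ht⟩
  rw [Function.iterate_fixed hfix t] at ht
  obtain ⟨v⟩ := ‹Nonempty V›
  have := ht ▸ Set.mem_univ v
  exact this

lemma notZFS_compl_singleton {V : Type} (A : V → V → Prop)
    (v : V) (hv : ∀ u, ¬ A u v) : ¬ IsZFS A ({v}ᶜ : Set V) := by
  have hfix : Bstep A ({v}ᶜ : Set V) = {v}ᶜ := by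
    unfold Bstep
    apply Set.union_eq_self_of_subset_right
    rintro w ⟨u, hu, huw⟩
    have hw : w ∈ Nout A u \ ({v}ᶜ : Set V) := by rw [huw]; exact Set.mem_singleton w
    have hwv : w = v := by simpa using hw.2
    subst hwv
    exact absurd hw.1 (hv u)
  rintro ⟨t, ht⟩
  rw [Function.iterate_fixed hfix t] at ht
  have : v ∈ ({v}ᶜ : Set V) := ht ▸ Set.mem_univ v
  exact this rfl

lemma ZFS_compl_singleton {V : Type} (A : V → V → Prop) (hA : Irreflexive A)
    (v u : V) (hu : A u v) : IsZFS A ({v}ᶜ : Set V) := by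
  refine ⟨1, ?_⟩
  simp only [Function.iterate_one]
  apply Set.eq_univ_of_forall
  intro w
  by_cases hw : w = v
  · subst hw
    right
    refine ⟨u, ?_, ?_⟩
    · intro h
      have : u = w := by simpa using h
      exact hA u (this ▸ hu)
    · ext x
      simp only [Set.mem_diff, Set.mem_compl_iff, Set.mem_singleton_iff, not_not]
      constructor
      · rintro ⟨_, hx⟩; exact hx
      · rintro rfl; exact ⟨hu, rfl⟩
  · left; exact hw

theorem stmt_4' {V : Type} [Fintype V] [Nonempty V] (A : V → V → Prop)
    (hA : Irreflexive A) :
    (sSup {k | ∃ S : Set V, ¬ IsZFS A S ∧ S.ncard = k}) = Fintype.card V - 1 ↔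
      ∃ v : V, ∀ u : V, ¬ A u v := by
  set T := {k | ∃ S : Set V, ¬ IsZFS A S ∧ S.ncard = k} with hT
  have hmem_le : ∀ k ∈ T, k ≤ Fintype.card V - 1 := by
    rintro k ⟨S, hS, rfl⟩
    have hle : S.ncard ≤ Fintype.card V := by
      simpa [Set.ncard_univ, Nat.card_eq_fintype_card] using
        Set.ncard_le_ncard (Set.subset_univ S) Set.finite_univ
    rcases lt_or_eq_of_le hle with h | h
    · omega
    · exfalso
      have hSu : S = Set.univ := by
        apply Set.eq_of_subset_of_ncard_le (Set.subset_univ S)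
        simp [Set.ncard_univ, Nat.card_eq_fintype_card, h]
      exact hS ⟨0, by simp [hSu]⟩
  have hbdd : BddAbove T := ⟨Fintype.card V - 1, hmem_le⟩
  have hne : T.Nonempty := ⟨0, ∅, notZFS_empty A, by simp⟩
  constructor
  · intro hF
    by_cases h1 : Fintype.card V = 1
    · obtain ⟨v, hv⟩ := Fintype.card_eq_one_iff.mp h1
      exact ⟨v, fun u h => hA u (by rw [← hv u] at h; exact h)⟩
    · have h2 : 2 ≤ Fintype.card V := by
        have := Fintype.card_pos (α := V); omega
      have hmem : Fintype.card V - 1 ∈ T := hF ▸ Nat.sSup_mem hne hbdd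
      obtain ⟨S, hS, hcard⟩ := hmem
      have hcompl : (Sᶜ).ncard = 1 := by
        have := Set.ncard_add_ncard_compl S
        rw [Nat.card_eq_fintype_card] at this
        omega
      obtain ⟨v, hv⟩ := Set.ncard_eq_one.mp hcompl
      have hSv : S = ({v}ᶜ : Set V) := by rw [← hv, compl_compl]
      refine ⟨v, fun u h => hS ?_⟩
      rw [hSv]
      exact ZFS_compl_singleton A hA v u h
  · rintro ⟨v, hv⟩
    apply le_antisymm
    · exact csSup_le hne hmem_le
    · apply le_csSup hbdd
      refine ⟨({v}ᶜ : Set V), notZFS_compl_singleton A v hv, ?_⟩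
      have := Set.ncard_add_ncard_compl ({v} : Set V)
      rw [Nat.card_eq_fintype_card, Set.ncard_singleton] at this
      omega


theorem stmt_4 {V : Type} [Fintype V] [Nonempty V] (A : V → V → Prop)
    (hA : Irreflexive A) :
    Fnum A = Fintype.card V - 1 ↔ ∃ v : V, ∀ u : V, ¬ A u v := by
  show (sSup {k | ∃ S : Set V, ¬ IsZFS A S ∧ S.ncard = k}) = Fintype.card V - 1 ↔ _
  exact stmt_4' A hA
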